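/- For variables x and y in a polynomial ring and k ≥ 1, the polarization of the ideal (x,y)^k equals ⋂_{p+q ≤ k+1, p,q ≥ 1} (x_p, y_q), where (x,y)^k is generated by the monomials x^a y^b with a+b = k, whose polarizations are x_1⋯x_a · y_1⋯y_b. -/

import Mathlib

open MvPolynomial

noncomputable def sab (a b : ℕ) : (Bool × ℕ) →₀ ℕ :=
  (∑ t ∈ Finset.range a, Finsupp.single (true, t) 1) +
  ∑ t ∈ Finset.range b, Finsupp.single (false, t) 1

lemma prodX {σ : Type*} {K : Type*} [CommSemiring K] (s : Finset ℕ) (g : ℕ → σ) :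
    (∏ t ∈ s, (X (g t) : MvPolynomial σ K)) =
      monomial (∑ t ∈ s, Finsupp.single (g t) 1) 1 := by
  classical
  induction s using Finset.induction with
  | empty => simp
  | insert _ _ h ih =>
    rw [Finset.prod_insert h, Finset.sum_insert h, ih, X, monomial_mul, one_mul]

lemma sab_true (a b u : ℕ) : sab a b (true, u) = if u < a then 1 else 0 := by
  simp [sab, Finsupp.single_apply, Prod.ext_iff, Finset.sum_ite_eq', Finset.mem_range]

lemma sab_false (a b u : ℕ) : sab a b (false, u) = if u < b then 1 else 0 := by
  simp [sab, Finsupp.single_apply, Prod.ext_iff, Finset.sum_ite_eq', Finset.mem_range]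

theorem stmt11 (K : Type*) [Field K] (k : ℕ) (hk : 1 ≤ k) :
    Ideal.span {m : MvPolynomial (Bool × ℕ) K | ∃ a b : ℕ, a + b = k ∧
        m = (∏ t ∈ Finset.range a, X (true, t)) * ∏ t ∈ Finset.range b, X (false, t)}
      = ⨅ (p : ℕ) (q : ℕ) (_ : p + q + 2 ≤ k + 1),
          Ideal.span {X (true, p), X (false, q)} := by
  have hset : {m : MvPolynomial (Bool × ℕ) K | ∃ a b : ℕ, a + b = k ∧
        m = (∏ t ∈ Finset.range a, X (true, t)) * ∏ t ∈ Finset.range b, X (false, t)} =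
      (fun s => monomial s (1 : K)) '' {s | ∃ a b : ℕ, a + b = k ∧ s = sab a b} := by
    ext m
    constructor
    · rintro ⟨a, b, hab, rfl⟩
      exact ⟨sab a b, ⟨a, b, hab, rfl⟩, by rw [prodX, prodX, sab, monomial_mul, one_mul]⟩
    · rintro ⟨s, ⟨a, b, hab, rfl⟩, rfl⟩
      exact ⟨a, b, hab, by rw [prodX, prodX, sab, monomial_mul, one_mul]⟩
  have hpair : ∀ p q : ℕ, ({X (true, p), X (false, q)} : Set (MvPolynomial (Bool × ℕ) K)) =
      X '' {(true, p), (false, q)} := by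
    intro p q
    rw [Set.image_insert_eq, Set.image_singleton]
  ext f
  rw [hset, mem_ideal_span_monomial_image]
  simp only [Ideal.mem_iInf, hpair, mem_ideal_span_X_image]
  constructor
  · intro H p q hpq m hm
    obtain ⟨s, ⟨a, b, hab, rfl⟩, hsm⟩ := H m hm
    by_cases hp : p < a
    · refine ⟨(true, p), by simp, ?_⟩
      have := hsm (true, p)
      rw [sab_true, if_pos hp] at this
      omega
    · refine ⟨(false, q), by simp, ?_⟩
      have hq : q < b := by omega
      have := hsm (false, q)
      rw [sab_false, if_pos hq] at this
      omega
  · intro H m hm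
    by_cases hall : ∀ t < k, m (true, t) ≠ 0
    · refine ⟨sab k 0, ⟨k, 0, by omega, rfl⟩, fun i => ?_⟩
      obtain ⟨c, u⟩ := i
      cases c
      · rw [sab_false]; simp
      · rw [sab_true]
        split
        · have := hall u (by omega); omega
        · omega
    · push_neg at hall
      obtain ⟨t0, ht0k, ht0⟩ := hall
      have hex : ∃ p, m (true, p) = 0 := ⟨t0, ht0⟩
      set a := Nat.find hex with ha
      have hak : a < k := lt_of_le_of_lt (Nat.find_le ht0) ht0k
      refine ⟨sab a (k - a), ⟨a, k - a, by omega, rfl⟩, fun i => ?_⟩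
      obtain ⟨c, u⟩ := i
      cases c
      · rw [sab_false]
        split
        · rename_i hu
          have := H a u (by omega) m hm
          simp only [Set.mem_insert_iff, Set.mem_singleton_iff] at this
          obtain ⟨i, hi, hne⟩ := this
          rcases hi with rfl | rfl
          · exact absurd (Nat.find_spec hex) hne
          · omega
        · omega
      · rw [sab_true]
        split
        · rename_i hu
          have := Nat.find_min hex hu
          omega
        · omega
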